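/- Let v ∈ 𝒰(I) be a threshold utility satisfying: for all γ, δ > 0 there exist C ∈ ℝ and an increasing sequence (t_n) in v(I) with inf_n t_n > C/(1+δ), C − δt_n ∈ v(I) for all n, and lim_{n→∞} ( v^{−1}(t_n) + γ·v^{−1}(C − δt_n) ) = ∞. If ρ is a law-invariant, star-shaped monetary risk measure on 𝒳 that is v-SD-consistent, then its asymptotic functional satisfies ρ^∞(X) := lim_{n→∞} ρ(nX)/n = ρ^w(X) = ess sup(−X) for all X ∈ 𝒳. -/

import Mathlib

open MeasureTheory Filter Set

noncomputable section

namespace Paper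

variable {Ω : Type*} [MeasurableSpace Ω]

/-- The probability measure `P` is atomless. -/
def Atomless (P : Measure Ω) : Prop :=
  ∀ s : Set Ω, MeasurableSet s → 0 < P s →
    ∃ t : Set Ω, MeasurableSet t ∧ t ⊆ s ∧ 0 < P t ∧ P t < P s

/-- `𝒳`: the essentially bounded random variables. -/
def MemX (P : Measure Ω) (X : Ω → ℝ) : Prop :=
  Measurable X ∧ ∃ C : ℝ, ∀ᵐ ω ∂P, |X ω| ≤ C

/-- `𝒰(I)`: twice differentiable functions with everywhere positive first
derivative on `I`. -/
def IsUtility (I : Set ℝ) (u : ℝ → ℝ) : Prop :=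
  (∀ x ∈ I, DifferentiableAt ℝ u x) ∧
  (∀ x ∈ I, DifferentiableAt ℝ (deriv u) x) ∧
  (∀ x ∈ I, 0 < deriv u x)

/-- Arrow–Pratt coefficient of absolute risk aversion. -/
def RA (u : ℝ → ℝ) (x : ℝ) : ℝ := -deriv (deriv u) x / deriv u x

/-- `𝓛¹_v`: `I`-valued random variables `X` with `v(X)` integrable. -/
def MemL1 (P : Measure Ω) (I : Set ℝ) (v : ℝ → ℝ) (X : Ω → ℝ) : Prop :=
  Measurable X ∧ (∀ᵐ ω ∂P, X ω ∈ I) ∧ Integrable (fun ω => v (X ω)) P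

/-- The `v`-SD order: `X ≤_{v-SD} Y`. -/
def vSD (P : Measure Ω) (I : Set ℝ) (v : ℝ → ℝ) (X Y : Ω → ℝ) : Prop :=
  ∀ u : ℝ → ℝ, IsUtility I u → (∀ x ∈ I, RA v x ≤ RA u x) →
    Integrable (fun ω => u (X ω)) P → Integrable (fun ω => u (Y ω)) P →
    ∫ ω, u (X ω) ∂P ≤ ∫ ω, u (Y ω) ∂P

/-- Second-order stochastic dominance. -/
def SSD (P : Measure Ω) (X Y : Ω → ℝ) : Prop :=
  ∀ u : ℝ → ℝ, IsUtility Set.univ u → ConcaveOn ℝ Set.univ u →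
    Integrable (fun ω => u (X ω)) P → Integrable (fun ω => u (Y ω)) P →
    ∫ ω, u (X ω) ∂P ≤ ∫ ω, u (Y ω) ∂P

/-- Monetary risk measure: antitone and cash-additive on `𝒳`. -/
def IsRiskMeasure (P : Measure Ω) (ρ : (Ω → ℝ) → ℝ) : Prop :=
  (∀ X Y : Ω → ℝ, MemX P X → MemX P Y → (∀ᵐ ω ∂P, X ω ≤ Y ω) → ρ Y ≤ ρ X) ∧
  (∀ X : Ω → ℝ, MemX P X → ∀ c : ℝ, ρ (fun ω => X ω + c) = ρ X - c)

/-- Worst-case risk measure `ρ^w(X) = ess sup (-X)`. -/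
def rhoW (P : Measure Ω) (X : Ω → ℝ) : ℝ :=
  sInf {m : ℝ | ∀ᵐ ω ∂P, -X ω ≤ m}

/-- `v`-SD-consistency of `φ` on the domain `D`. -/
def VSDConsistent (P : Measure Ω) (I : Set ℝ) (v : ℝ → ℝ)
    (D : Set (Ω → ℝ)) (φ : (Ω → ℝ) → ℝ) : Prop :=
  ∀ X Y : Ω → ℝ, X ∈ D → Y ∈ D → MemL1 P I v X → MemL1 P I v Y →
    vSD P I v X Y → φ Y ≤ φ X

/-- `𝒞`: the a.s. strictly positive bounded random variables. -/
def MemC (P : Measure Ω) (X : Ω → ℝ) : Prop :=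
  MemX P X ∧ ∀ᵐ ω ∂P, 0 < X ω

/-- `𝓔 = {e^Y : Y ∈ 𝒳}` (up to a.s. equality). -/
def MemE (P : Measure Ω) (X : Ω → ℝ) : Prop :=
  ∃ Y : Ω → ℝ, MemX P Y ∧ ∀ᵐ ω ∂P, X ω = Real.exp (Y ω)

/-- Return risk measure. -/
def IsRRM (P : Measure Ω) (η : (Ω → ℝ) → ℝ) : Prop :=
  (∀ X : Ω → ℝ, MemC P X → 0 < η X) ∧
  (∀ X Y : Ω → ℝ, MemC P X → MemC P Y → (∀ᵐ ω ∂P, X ω ≤ Y ω) → η Y ≤ η X) ∧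
  (∀ X : Ω → ℝ, MemC P X → ∀ t : ℝ, 0 < t → η (fun ω => t * X ω) = t⁻¹ * η X)

/-- Loss-based return risk measure. -/
def IsLossRRM (P : Measure Ω) (κ : (Ω → ℝ) → ℝ) : Prop :=
  (∀ L : Ω → ℝ, MemC P L → 0 < κ L) ∧
  (∀ L L' : Ω → ℝ, MemC P L → MemC P L' → (∀ᵐ ω ∂P, L' ω ≤ L ω) → κ L' ≤ κ L) ∧
  (∀ L : Ω → ℝ, MemC P L → ∀ t : ℝ, 0 < t → κ (fun ω => t * L ω) = t * κ L)

/-- Base risk measure `ρ_{Z,v}`. -/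
def baseRM (P : Measure Ω) (v : ℝ → ℝ) (Z X : Ω → ℝ) : ℝ :=
  sInf {m : ℝ | vSD P Set.univ v Z (fun ω => X ω + m)}

/-- Lower quantile function. -/
def qf (P : Measure Ω) (X : Ω → ℝ) (r : ℝ) : ℝ :=
  sInf {x : ℝ | r ≤ (P {ω | X ω ≤ x}).toReal}

/-- Expected Shortfall at level `p`. -/
def ES (P : Measure Ω) (p : ℝ) (X : Ω → ℝ) : ℝ :=
  if p < 1 then -(1 / (1 - p)) * ∫ r in (0:ℝ)..(1 - p), qf P X r
  else rhoW P X

section AuxiliaryLemmas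

open scoped ENNReal Classical

variable {P : Measure Ω}

/-- Halving lemma for atomless measures. -/
lemma atomless_half (hP : Atomless P) [IsFiniteMeasure P] {E : Set Ω}
    (hE : MeasurableSet E) (h0 : 0 < P E) :
    ∃ F, MeasurableSet F ∧ F ⊆ E ∧ 0 < P F ∧ P F ≤ P E / 2 := by
  obtain ⟨t, htm, hts, h0t, hlt⟩ := hP E hE h0
  by_cases hc : P t ≤ P E / 2
  · exact ⟨t, htm, hts, h0t, hc⟩
  · push_neg at hc
    have hd : P (E \ t) = P E - P t :=
      measure_diff hts htm.nullMeasurableSet (measure_ne_top P t)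
    refine ⟨E \ t, hE.diff htm, Set.diff_subset, ?_, ?_⟩
    · rw [hd]; exact tsub_pos_of_lt hlt
    · rw [hd]
      calc P E - P t ≤ P E - P E / 2 := tsub_le_tsub_left hc.le _
        _ = P E / 2 := ENNReal.sub_half (measure_ne_top P E)

/-- Arbitrarily small subsets of positive measure. -/
lemma atomless_small (hP : Atomless P) [IsFiniteMeasure P] {E : Set Ω}
    (hE : MeasurableSet E) (h0 : 0 < P E) {ε : ℝ≥0∞} (hε : ε ≠ 0) :
    ∃ F, MeasurableSet F ∧ F ⊆ E ∧ 0 < P F ∧ P F ≤ ε := by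
  have key : ∀ m : ℕ, ∃ F, MeasurableSet F ∧ F ⊆ E ∧ 0 < P F ∧ P F ≤ P E * 2⁻¹ ^ m := by
    intro m
    induction m with
    | zero => exact ⟨E, hE, subset_rfl, h0, by simp⟩
    | succ m ih =>
      obtain ⟨F, hFm, hFE, hF0, hFle⟩ := ih
      obtain ⟨G, hGm, hGF, hG0, hGle⟩ := atomless_half hP hFm hF0
      refine ⟨G, hGm, hGF.trans hFE, hG0, ?_⟩
      calc P G ≤ P F / 2 := hGle
        _ = P F * 2⁻¹ := by rw [div_eq_mul_inv]
        _ ≤ P E * 2⁻¹ ^ m * 2⁻¹ := by gcongr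
        _ = P E * 2⁻¹ ^ (m + 1) := by rw [mul_assoc, ← pow_succ]
  rcases eq_or_ne ε ∞ with rfl | hεtop
  · obtain ⟨F, h1, h2, h3, _⟩ := key 0
    exact ⟨F, h1, h2, h3, le_top⟩
  · obtain ⟨m, hm⟩ := ENNReal.exists_inv_two_pow_lt
      (show ε / P E ≠ 0 by
        simp only [ne_eq, ENNReal.div_eq_zero_iff, not_or]
        exact ⟨hε, measure_ne_top P E⟩)
    obtain ⟨F, h1, h2, h3, h4⟩ := key m
    refine ⟨F, h1, h2, h3, ?_⟩
    calc P F ≤ P E * 2⁻¹ ^ m := h4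
      _ ≤ P E * (ε / P E) := by gcongr
      _ ≤ ε := ENNReal.mul_div_le

/-- Intermediate value theorem for atomless finite measures (Sierpiński). -/
lemma atomless_ivt (hP : Atomless P) [IsFiniteMeasure P] {A : Set Ω}
    (hA : MeasurableSet A) {c : ℝ≥0∞} (hc : c ≤ P A) :
    ∃ B, MeasurableSet B ∧ B ⊆ A ∧ P B = c := by
  classical
  have hcfin : c ≠ ∞ := (hc.trans_lt (measure_lt_top P A)).ne
  set Q : Set Ω → Prop := fun B => MeasurableSet B ∧ B ⊆ A ∧ P B ≤ c with hQdef
  have hQempty : Q ∅ := ⟨MeasurableSet.empty, Set.empty_subset A, by simp⟩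
  have step : ∀ (m : ℕ) (B : Set Ω), Q B → ∃ B', Q B' ∧ B ⊆ B' ∧
      ∀ s, Q s → B ⊆ s → (P s).toReal ≤ (P B').toReal + 1 / (m + 1) := by
    intro m B hB
    set S : Set ℝ := {r | ∃ s, (Q s ∧ B ⊆ s) ∧ (P s).toReal = r} with hS
    have hne : S.Nonempty := ⟨(P B).toReal, B, ⟨hB, subset_rfl⟩, rfl⟩
    have hbdd : BddAbove S := by
      refine ⟨c.toReal, ?_⟩
      rintro r ⟨s, ⟨⟨_, _, hsc⟩, _⟩, rfl⟩
      exact ENNReal.toReal_mono hcfin hsc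
    have hεm : (0:ℝ) < 1 / (m + 1) := by positivity
    obtain ⟨r, ⟨s, ⟨hQs, hBs⟩, hr⟩, hlt⟩ :=
      exists_lt_of_lt_csSup hne (show sSup S - 1 / (m + 1) < sSup S by linarith)
    refine ⟨s, hQs, hBs, fun s' hQs' hBs' => ?_⟩
    have h1 : (P s').toReal ≤ sSup S := le_csSup hbdd ⟨s', ⟨hQs', hBs'⟩, rfl⟩
    rw [← hr] at hlt
    linarith
  choose! f hf1 hf2 hf3 using step
  set seq : ℕ → Set Ω := fun m => Nat.rec ∅ (fun k Bk => f k Bk) m with hseqdef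
  have hseqQ : ∀ m, Q (seq m) := by
    intro m
    induction m with
    | zero => exact hQempty
    | succ k ih => exact hf1 k _ ih
  have hmono' : Monotone seq :=
    monotone_nat_of_le_succ (fun k => hf2 k _ (hseqQ k))
  set B := ⋃ m, seq m with hBdef
  have hBQ : Q B := by
    refine ⟨MeasurableSet.iUnion (fun m => (hseqQ m).1),
      Set.iUnion_subset (fun m => (hseqQ m).2.1), ?_⟩
    rw [hmono'.measure_iUnion]
    exact iSup_le fun m => (hseqQ m).2.2
  refine ⟨B, hBQ.1, hBQ.2.1, ?_⟩
  by_contra hne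
  have hBlt : P B < c := lt_of_le_of_ne hBQ.2.2 hne
  have hdiff : 0 < P (A \ B) := by
    have h1 : P (A \ B) = P A - P B :=
      measure_diff hBQ.2.1 hBQ.1.nullMeasurableSet (measure_ne_top P B)
    rw [h1]
    exact tsub_pos_of_lt (lt_of_lt_of_le hBlt hc)
  obtain ⟨F, hFm, hFsub, hF0, hFle⟩ :=
    atomless_small hP (hA.diff hBQ.1) hdiff ((tsub_pos_of_lt hBlt).ne' : c - P B ≠ 0)
  have hdisj : Disjoint B F :=
    Set.disjoint_of_subset_right hFsub disjoint_sdiff_right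
  have hPt : P (B ∪ F) = P B + P F := measure_union hdisj hFm
  have hQt : Q (B ∪ F) := by
    refine ⟨hBQ.1.union hFm, Set.union_subset hBQ.2.1 (hFsub.trans Set.diff_subset), ?_⟩
    rw [hPt]
    calc P B + P F ≤ P B + (c - P B) := by gcongr
      _ = c := add_tsub_cancel_of_le hBlt.le
  have hFre : 0 < (P F).toReal := ENNReal.toReal_pos hF0.ne' (measure_ne_top P F)
  obtain ⟨m, hm⟩ := exists_nat_one_div_lt hFre
  have hcontra := hf3 m (seq m) (hseqQ m) (B ∪ F) hQt
    ((Set.subset_iUnion seq m).trans Set.subset_union_left)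
  have hdefeq : f m (seq m) = seq (m + 1) := rfl
  rw [hdefeq] at hcontra
  have hsub1 : seq (m + 1) ⊆ B := Set.subset_iUnion seq (m + 1)
  have hle1 : (P (seq (m + 1))).toReal ≤ (P B).toReal :=
    ENNReal.toReal_mono (measure_ne_top P B) (measure_mono hsub1)
  have htR : (P (B ∪ F)).toReal = (P B).toReal + (P F).toReal := by
    rw [hPt, ENNReal.toReal_add (measure_ne_top P B) (measure_ne_top P F)]
  rw [htR] at hcontra
  linarith

lemma memX_const [IsProbabilityMeasure P] (c : ℝ) : MemX P (fun _ : Ω => c) :=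
  ⟨measurable_const, ⟨|c|, Filter.Eventually.of_forall fun _ => le_refl _⟩⟩

lemma integrable_ite [IsProbabilityMeasure P] {s : Set Ω} (hs : MeasurableSet s) (p q : ℝ) :
    Integrable (fun ω => if ω ∈ s then p else q) P := by
  have hfun : (fun ω => if ω ∈ s then p else q)
      = fun ω => s.indicator (fun _ => p - q) ω + q := by
    funext ω; by_cases h : ω ∈ s <;> simp [h]
  rw [hfun]
  exact ((integrable_const (p - q)).indicator hs).add (integrable_const q)

lemma integral_ite [IsProbabilityMeasure P] {s : Set Ω} (hs : MeasurableSet s) (p q : ℝ) :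
    ∫ ω, (if ω ∈ s then p else q) ∂P = (P s).toReal * p + (1 - (P s).toReal) * q := by
  have hfun : (fun ω => if ω ∈ s then p else q)
      = fun ω => s.indicator (fun _ => p - q) ω + q := by
    funext ω; by_cases h : ω ∈ s <;> simp [h]
  rw [hfun, integral_add ((integrable_const (p - q)).indicator hs) (integrable_const q),
    integral_indicator_const _ hs, integral_const]
  simp only [measureReal_def, measure_univ, ENNReal.toReal_one, smul_eq_mul, one_mul]
  ring

lemma ae_le_sInf [IsProbabilityMeasure P] {f : Ω → ℝ} {C : ℝ}
    (hC : ∀ᵐ ω ∂P, |f ω| ≤ C) :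
    {m : ℝ | ∀ᵐ ω ∂P, f ω ≤ m}.Nonempty ∧ BddBelow {m : ℝ | ∀ᵐ ω ∂P, f ω ≤ m} ∧
      (∀ᵐ ω ∂P, f ω ≤ sInf {m : ℝ | ∀ᵐ ω ∂P, f ω ≤ m}) := by
  haveI : (MeasureTheory.ae P).NeBot := ae_neBot.mpr (IsProbabilityMeasure.ne_zero P)
  set S := {m : ℝ | ∀ᵐ ω ∂P, f ω ≤ m} with hS
  have hCS : C ∈ S := hC.mono fun ω h => (abs_le.mp h).2
  have hbdd : BddBelow S := by
    refine ⟨-C, fun m hm => ?_⟩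
    obtain ⟨ω, h1, h2⟩ := ((show ∀ᵐ ω ∂P, f ω ≤ m from hm).and hC).exists
    have := (abs_le.mp h2).1
    linarith
  refine ⟨⟨C, hCS⟩, hbdd, ?_⟩
  have hk : ∀ k : ℕ, ∀ᵐ ω ∂P, f ω ≤ sInf S + 1 / ((k : ℝ) + 1) := by
    intro k
    obtain ⟨m, hm, hlt⟩ := Real.lt_sInf_add_pos ⟨C, hCS⟩
      (show (0:ℝ) < 1 / ((k : ℝ) + 1) by positivity)
    exact (show ∀ᵐ ω ∂P, f ω ≤ m from hm).mono fun ω h => h.trans hlt.le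
  refine (ae_all_iff.mpr hk).mono fun ω h => ?_
  by_contra hcon
  push_neg at hcon
  obtain ⟨k, hk'⟩ := exists_nat_one_div_lt (sub_pos.mpr hcon)
  have h2 := h k
  linarith

lemma sInf_tight [IsProbabilityMeasure P] {f : Ω → ℝ} {C : ℝ}
    (hC : ∀ᵐ ω ∂P, |f ω| ≤ C) {ε : ℝ} (hε : 0 < ε) :
    0 < P {ω | sInf {m : ℝ | ∀ᵐ ω ∂P, f ω ≤ m} - ε < f ω} := by
  obtain ⟨hne, hbdd, -⟩ := ae_le_sInf hC
  rw [pos_iff_ne_zero]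
  intro h0
  have hnm : ∀ᵐ ω ∂P, ω ∉ {ω | sInf {m : ℝ | ∀ᵐ ω ∂P, f ω ≤ m} - ε < f ω} :=
    measure_eq_zero_iff_ae_notMem.mp h0
  have hmem : sInf {m : ℝ | ∀ᵐ ω ∂P, f ω ≤ m} - ε ∈ {m : ℝ | ∀ᵐ ω ∂P, f ω ≤ m} :=
    show ∀ᵐ ω ∂P, f ω ≤ sInf {m : ℝ | ∀ᵐ ω ∂P, f ω ≤ m} - ε from
    hnm.mono fun ω h => by
      simp only [Set.mem_setOf_eq, not_lt] at h
      exact h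
  have := csInf_le hbdd hmem
  linarith

/-- The key concavity-transfer lemma: if `u` is (pointwise) more risk averse
than `v`, then `u`-certainty equivalents are below `v`-certainty equivalents
for binary lotteries. -/
lemma key_concave {I : Set ℝ} (hIconn : I.OrdConnected) {v u : ℝ → ℝ}
    (hv : IsUtility I v) (hu : IsUtility I u) (hRA : ∀ x ∈ I, RA v x ≤ RA u x)
    {a b z θ : ℝ} (ha : a ∈ I) (hb : b ∈ I) (haz : a < z) (hzb : z < b)
    (hθ0 : 0 < θ) (hθ1 : θ < 1) (hvab : v a < v b)
    (hvz : v z = θ * v a + (1 - θ) * v b) :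
    θ * u a + (1 - θ) * u b ≤ u z := by
  have hab : a < b := haz.trans hzb
  have hsub : Set.Icc a b ⊆ I := hIconn.out ha hb
  have hvd : ∀ w ∈ Set.Icc a b, DifferentiableAt ℝ v w := fun w hw => hv.1 w (hsub hw)
  have hud : ∀ w ∈ Set.Icc a b, DifferentiableAt ℝ u w := fun w hw => hu.1 w (hsub hw)
  have hvc : ContinuousOn v (Set.Icc a b) :=
    fun w hw => (hvd w hw).continuousAt.continuousWithinAt
  have huc : ContinuousOn u (Set.Icc a b) :=
    fun w hw => (hud w hw).continuousAt.continuousWithinAt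
  -- the ratio of marginal utilities is antitone
  have hratio : AntitoneOn (fun w => deriv u w / deriv v w) (Set.Icc a b) := by
    apply antitoneOn_of_deriv_nonpos (convex_Icc a b)
    · intro w hw
      exact (((hu.2.1 w (hsub hw)).div (hv.2.1 w (hsub hw))
        (ne_of_gt (hv.2.2 w (hsub hw)))).continuousAt).continuousWithinAt
    · intro w hw
      rw [interior_Icc] at hw
      have hwI : w ∈ I := hsub (Set.Ioo_subset_Icc_self hw)
      exact ((hu.2.1 w hwI).div (hv.2.1 w hwI)
        (ne_of_gt (hv.2.2 w hwI))).differentiableWithinAt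
    · intro w hw
      rw [interior_Icc] at hw
      have hwI : w ∈ I := hsub (Set.Ioo_subset_Icc_self hw)
      have hder : deriv (fun w => deriv u w / deriv v w) w
          = (deriv (deriv u) w * deriv v w - deriv u w * deriv (deriv v) w)
            / (deriv v w) ^ 2 :=
        deriv_div (hu.2.1 w hwI) (hv.2.1 w hwI) (ne_of_gt (hv.2.2 w hwI))
      rw [hder]
      have h1 := hRA w hwI
      have hv' := hv.2.2 w hwI
      have hu' := hu.2.2 w hwI
      unfold RA at h1
      rw [div_le_div_iff₀ hv' hu'] at h1
      apply div_nonpos_iff.mpr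
      exact Or.inr ⟨by nlinarith, sq_nonneg _⟩
  -- Cauchy MVT on [a, z]
  obtain ⟨ξ, hξmem, hMVT1⟩ :=
    exists_ratio_hasDerivAt_eq_ratio_slope v (deriv v) haz
      (hvc.mono (Set.Icc_subset_Icc_right hzb.le))
      (fun w hw => (hvd w ⟨hw.1.le, (hw.2.trans hzb).le⟩).hasDerivAt)
      u (deriv u)
      (huc.mono (Set.Icc_subset_Icc_right hzb.le))
      (fun w hw => (hud w ⟨hw.1.le, (hw.2.trans hzb).le⟩).hasDerivAt)
  -- Cauchy MVT on [z, b]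
  obtain ⟨η, hηmem, hMVT2⟩ :=
    exists_ratio_hasDerivAt_eq_ratio_slope v (deriv v) hzb
      (hvc.mono (Set.Icc_subset_Icc_left haz.le))
      (fun w hw => (hvd w ⟨(haz.trans hw.1).le, hw.2.le⟩).hasDerivAt)
      u (deriv u)
      (huc.mono (Set.Icc_subset_Icc_left haz.le))
      (fun w hw => (hud w ⟨(haz.trans hw.1).le, hw.2.le⟩).hasDerivAt)
  have hξab : ξ ∈ Set.Icc a b := ⟨hξmem.1.le, (hξmem.2.trans hzb).le⟩
  have hηab : η ∈ Set.Icc a b := ⟨(haz.trans hηmem.1).le, hηmem.2.le⟩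
  have hξη : ξ ≤ η := (hξmem.2.trans hηmem.1).le
  have hRmono := hratio hξab hηab hξη
  have hv'ξ : 0 < deriv v ξ := hv.2.2 ξ (hsub hξab)
  have hv'η : 0 < deriv v η := hv.2.2 η (hsub hηab)
  have hcross : deriv u η * deriv v ξ ≤ deriv u ξ * deriv v η := by
    rw [div_le_div_iff₀ hv'η hv'ξ] at hRmono
    linarith
  have hd1 : 0 < v z - v a := by
    have h1 := mul_pos (show (0:ℝ) < 1 - θ by linarith) (sub_pos.mpr hvab)
    nlinarith
  have hd2 : 0 < v b - v z := by
    have h2 := mul_pos hθ0 (sub_pos.mpr hvab)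
    nlinarith
  -- hMVT1 : (u z - u a) * deriv v ξ = (v z - v a) * deriv u ξ
  -- hMVT2 : (u b - u z) * deriv v η = (v b - v z) * deriv u η
  have hdiam : (u b - u z) * (v z - v a) ≤ (u z - u a) * (v b - v z) := by
    have hmul := mul_le_mul_of_nonneg_left hcross
      (le_of_lt (mul_pos hd1 hd2))
    have e1 : (u b - u z) * (v z - v a) * (deriv v ξ * deriv v η)
        = (v z - v a) * (v b - v z) * (deriv u η * deriv v ξ) := by
      linear_combination (v z - v a) * deriv v ξ * hMVT2
    have e2 : (u z - u a) * (v b - v z) * (deriv v ξ * deriv v η)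
        = (v z - v a) * (v b - v z) * (deriv u ξ * deriv v η) := by
      linear_combination (v b - v z) * deriv v η * hMVT1
    rw [← e1, ← e2] at hmul
    exact le_of_mul_le_mul_right hmul (mul_pos hv'ξ hv'η)
  have hD : 0 < v b - v a := by linarith
  have eva : v z - v a = (1 - θ) * (v b - v a) := by linear_combination hvz
  have evb : v b - v z = θ * (v b - v a) := by linear_combination -hvz
  rw [eva, evb] at hdiam
  have h7 : (u b - u z) * (1 - θ) * (v b - v a) ≤ (u z - u a) * θ * (v b - v a) := by
    ring_nf at hdiam ⊢
    linarith
  have h8 := le_of_mul_le_mul_right h7 hD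
  nlinarith [h8]

end AuxiliaryLemmas


set_option maxHeartbeats 1000000 in
/-- Suppose the threshold utility `v ∈ 𝒰(I)` satisfies
Assumption (star): for all `γ, δ > 0` there are `C ∈ ℝ` and an increasing
sequence `(t_n) = (v (x n))` in `v(I)` with `inf_n t_n > C / (1 + δ)`,
`C - δ t_n ∈ v(I)` (witnessed by `y n ∈ I` with `v (y n) = C - δ t n`), and
`v⁻¹(t_n) + γ v⁻¹(C - δ t_n) = x n + γ y n → ∞`. If `ρ` is a law-invariant,
star-shaped monetary risk measure on `𝒳` which is `v`-SD-consistent, then its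
asymptotic functional is the worst-case risk measure:
`ρ(nX)/n → ρ^w(X)` for every `X ∈ 𝒳`. -/
theorem statement16 (P : Measure Ω) [IsProbabilityMeasure P] (hP : Atomless P)
    (I : Set ℝ) (hIopen : IsOpen I) (hIconn : I.OrdConnected) (hIne : I.Nonempty)
    (v : ℝ → ℝ) (hv : IsUtility I v)
    (hstar : ∀ γ : ℝ, 0 < γ → ∀ δ : ℝ, 0 < δ → ∃ C : ℝ, ∃ x y : ℕ → ℝ,
      (∀ n, x n ∈ I) ∧ (∀ n, y n ∈ I) ∧
      StrictMono (fun n => v (x n)) ∧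
      (∀ n, C / (1 + δ) < v (x n)) ∧
      (∀ n, v (y n) = C - δ * v (x n)) ∧
      Tendsto (fun n => x n + γ * y n) atTop atTop)
    (ρ : (Ω → ℝ) → ℝ) (hρ : IsRiskMeasure P ρ)
    (hlaw : ∀ X Y : Ω → ℝ, MemX P X → MemX P Y → P.map X = P.map Y → ρ X = ρ Y)
    (hnorm : ρ (fun _ => 0) = 0)
    (hss : ∀ X : Ω → ℝ, MemX P X → ∀ l : ℝ, 1 ≤ l →
      l * ρ X ≤ ρ (fun ω => l * X ω))
    (hcons : VSDConsistent P I v {X | MemX P X} ρ) :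
    ∀ X : Ω → ℝ, MemX P X →
      Tendsto (fun n : ℕ => ρ (fun ω => (n : ℝ) * X ω) / (n : ℝ)) atTop
        (nhds (rhoW P X)) := by
  classical
  intro X hX
  obtain ⟨hXm, CX, hCX⟩ := hX
  have hXmem : MemX P X := ⟨hXm, CX, hCX⟩
  obtain ⟨hmono, hcash⟩ := hρ
  haveI : (MeasureTheory.ae P).NeBot := ae_neBot.mpr (IsProbabilityMeasure.ne_zero P)
  have hconstρ : ∀ c : ℝ, ρ (fun _ => c) = -c := by
    intro c
    have := hcash (fun _ => 0) (memX_const 0) c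
    simpa [hnorm] using this
  have memX_affine : ∀ s c : ℝ, MemX P (fun ω => s * X ω + c) := by
    intro s c
    refine ⟨(hXm.const_mul s).add_const c, |s| * CX + |c|, hCX.mono fun ω h => ?_⟩
    calc |s * X ω + c| ≤ |s * X ω| + |c| := abs_add_le _ _
      _ ≤ |s| * CX + |c| := by
          rw [abs_mul]
          have : |s| * |X ω| ≤ |s| * CX := mul_le_mul_of_nonneg_left h (abs_nonneg s)
          linarith
  have memX_smul : ∀ s : ℝ, MemX P (fun ω => s * X ω) := by
    intro s
    have := memX_affine s 0
    simpa using this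
  -- the essential bounds
  set M := rhoW P X with hMdef
  have hM1 : ∀ᵐ ω ∂P, -X ω ≤ M :=
    (ae_le_sInf (f := fun ω => -X ω) (hCX.mono fun ω h => by rwa [abs_neg])).2.2
  set Bb := sInf {m : ℝ | ∀ᵐ ω ∂P, X ω ≤ m} with hBbdef
  have hB1 : ∀ᵐ ω ∂P, X ω ≤ Bb := (ae_le_sInf hCX).2.2
  clear_value M Bb
  have hBM : 0 ≤ Bb + M := by
    obtain ⟨ω, h1, h2⟩ := (hB1.and hM1).exists
    linarith
  -- upper bound ρ(nX)/n ≤ M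
  have hup : ∀ n : ℕ, 1 ≤ n → ρ (fun ω => (n : ℝ) * X ω) / n ≤ M := by
    intro n hn
    have hnpos : (0:ℝ) < n := by exact_mod_cast hn
    have h1 : ρ (fun ω => (n : ℝ) * X ω) ≤ ρ (fun _ => -((n : ℝ) * M)) := by
      apply hmono _ _ (memX_const _) (memX_smul _)
      exact hM1.mono fun ω h => by
        have := mul_le_mul_of_nonneg_left h hnpos.le
        linarith only [this]
    rw [hconstρ] at h1
    rw [div_le_iff₀ hnpos]
    linarith
  -- monotonicity of t ↦ ρ(tX)/t
  have hgm : ∀ s t : ℝ, 0 < s → s ≤ t →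
      ρ (fun ω => s * X ω) / s ≤ ρ (fun ω => t * X ω) / t := by
    intro s t hs hst
    have ht : 0 < t := hs.trans_le hst
    have hl : 1 ≤ t / s := (one_le_div hs).mpr hst
    have h2 := hss (fun ω => s * X ω) (memX_smul s) (t / s) hl
    beta_reduce at h2
    have heq : (fun ω => t / s * (s * X ω)) = fun ω => t * X ω := by
      funext ω
      rw [← mul_assoc, div_mul_cancel₀ t (ne_of_gt hs)]
    rw [heq] at h2
    rw [div_mul_eq_mul_div, div_le_iff₀ hs] at h2
    rw [div_le_div_iff₀ hs ht]
    linarith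
  -- the key lower bound
  have hlow : ∀ ε : ℝ, 0 < ε → ∃ N : ℕ, 1 ≤ N ∧
      M - ε ≤ ρ (fun ω => (N : ℝ) * X ω) / N := by
    intro ε hε
    have hε1 : 0 < ε / 2 := half_pos hε
    by_cases hKle : Bb + M ≤ ε / 2
    · refine ⟨1, le_refl 1, ?_⟩
      have h1 : ρ (fun _ => ε / 2 - M) ≤ ρ (fun ω => (1:ℝ) * X ω) := by
        apply hmono _ _ (memX_smul 1) (memX_const _)
        exact hB1.mono fun ω h => by linarith [h]
      rw [hconstρ] at h1
      simp only [Nat.cast_one, div_one]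
      linarith
    · push_neg at hKle
      set K := Bb + M - ε / 2 with hKdef
      have hK : 0 < K := by rw [hKdef]; linarith
      clear_value K
      -- the bad event
      have hA0 : 0 < P {ω | M - ε / 2 < -X ω} := by
        rw [hMdef]
        exact sInf_tight (f := fun ω => -X ω) (hCX.mono fun ω h => by rwa [abs_neg]) hε1
      set A := {ω | M - ε / 2 < -X ω} with hAdef
      have hAmeas : MeasurableSet A := measurableSet_lt measurable_const hXm.neg
      set p := (P A).toReal with hpdef
      have hp : 0 < p := ENNReal.toReal_pos hA0.ne' (measure_ne_top P A)
      clear_value A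
      set δ := max 1 ((1 - p) / p) with hδdef
      have hδ : (0:ℝ) < δ := lt_of_lt_of_le one_pos (le_max_left _ _)
      have h1δ : (0:ℝ) < 1 + δ := by linarith
      have hq1 : (1:ℝ) / (1 + δ) ≤ p := by
        have h1 : (1 - p) / p ≤ δ := le_max_right _ _
        rw [div_le_iff₀ hp] at h1
        rw [div_le_iff₀ h1δ]
        linarith only [h1]
      have hqpos : (0:ℝ) < 1 / (1 + δ) := div_pos one_pos h1δ
      clear_value p δ
      rw [hpdef] at hq1
      have hε2 : 0 < ε / 2 := hε1
      set γ := K / (ε / 2) with hγdef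
      have hγ : 0 < γ := div_pos hK hε2
      have hKγ : γ * (ε / 2) = K := by
        rw [hγdef]
        field_simp
      clear_value γ
      obtain ⟨C, x, y, hxI, hyI, hvxmono, hvxgt, hvy, htend⟩ := hstar γ hγ δ hδ
      -- basic monotonicity facts about v
      have hvmono : ∀ a ∈ I, ∀ b ∈ I, a < b → v a < v b := by
        intro a ha b hb hab
        have hsub : Set.Icc a b ⊆ I := hIconn.out ha hb
        have hsm : StrictMonoOn v (Set.Icc a b) := by
          apply strictMonoOn_of_deriv_pos (convex_Icc a b)
          · intro w hw
            exact (hv.1 w (hsub hw)).continuousAt.continuousWithinAt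
          · intro w hw
            rw [interior_Icc] at hw
            exact hv.2.2 w (hsub (Set.Ioo_subset_Icc_self hw))
        exact hsm (Set.left_mem_Icc.mpr hab.le) (Set.right_mem_Icc.mpr hab.le) hab
      have hvlt : ∀ a ∈ I, ∀ b ∈ I, v a < v b → a < b := by
        intro a ha b hb h
        by_contra hcon
        push_neg at hcon
        rcases eq_or_lt_of_le hcon with heq | hlt
        · rw [heq] at h; exact lt_irrefl _ h
        · exact absurd (hvmono b hb a ha hlt) (by linarith)
      have hvle : ∀ a ∈ I, ∀ b ∈ I, v a ≤ v b → a ≤ b := by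
        intro a ha b hb h
        by_contra hcon
        push_neg at hcon
        exact absurd (hvmono b hb a ha hcon) (by linarith)
      have hvyx : ∀ n, v (y n) < C / (1 + δ) := by
        intro n
        rw [hvy n]
        have hx' : C < v (x n) * (1 + δ) := (div_lt_iff₀ h1δ).mp (hvxgt n)
        rw [lt_div_iff₀ h1δ]
        have h2 := mul_lt_mul_of_pos_left hx' hδ
        linarith only [h2]
      have hyx : ∀ n, y n < x n :=
        fun n => hvlt _ (hyI n) _ (hxI n) (lt_trans (hvyx n) (hvxgt n))
      have hx0 : ∀ n, x 0 ≤ x n := by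
        intro n
        rcases Nat.eq_zero_or_pos n with rfl | hn
        · exact le_refl _
        · exact (hvlt _ (hxI 0) _ (hxI n) (hvxmono hn)).le
      have hy0 : ∀ n, y n ≤ y 0 := by
        intro n
        apply hvle _ (hyI n) _ (hyI 0)
        rw [hvy n, hvy 0]
        have h1 : v (x 0) ≤ v (x n) := hvxmono.monotone (Nat.zero_le n)
        have h2 := mul_le_mul_of_nonneg_left h1 hδ.le
        linarith only [h2]
      -- the pivot point z with v z = C/(1+δ)
      have hIccI : Set.Icc (y 0) (x 0) ⊆ I := hIconn.out (hyI 0) (hxI 0)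
      have hvcont : ContinuousOn v (Set.Icc (y 0) (x 0)) :=
        fun w hw => (hv.1 w (hIccI hw)).continuousAt.continuousWithinAt
      obtain ⟨z, hzmem, hvz⟩ := intermediate_value_Ioo (hyx 0).le hvcont
        ⟨hvyx 0, hvxgt 0⟩
      have hzI : z ∈ I := hIccI (Set.Ioo_subset_Icc_self hzmem)
      -- choose n large enough
      obtain ⟨n, hn⟩ :=
        (htend.eventually_ge_atTop (max ((1 + γ) * z) (K + (1 + γ) * y 0))).exists
      have hcond1 : (1 + γ) * z ≤ x n + γ * y n := le_trans (le_max_left _ _) hn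
      have hcond2 : K + (1 + γ) * y 0 ≤ x n + γ * y n := le_trans (le_max_right _ _) hn
      have hxyn : 0 < x n - y n := sub_pos.mpr (hyx n)
      set t := (x n - y n) / K with htdef
      have htpos : 0 < t := div_pos hxyn hK
      have ht1 : 1 ≤ t := by
        rw [le_div_iff₀ hK]
        have h1 := mul_le_mul_of_nonneg_left (hy0 n) (show (0:ℝ) ≤ 1 + γ by linarith only [hγ])
        linarith only [hcond2, h1]
      have htK : t * K = x n - y n := by
        rw [htdef]
        field_simp
      clear_value t
      -- the auxiliary binary lottery
      have hAsub : ENNReal.ofReal (1 / (1 + δ)) ≤ P A := by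
        rw [← ENNReal.ofReal_toReal (measure_ne_top P A)]
        exact ENNReal.ofReal_le_ofReal hq1
      obtain ⟨Bs, hBsmeas, hBssub, hBsP⟩ := atomless_ivt hP hAmeas hAsub
      have hPBs : (P Bs).toReal = 1 / (1 + δ) := by
        rw [hBsP, ENNReal.toReal_ofReal hqpos.le]
      set Z : Ω → ℝ := fun ω => if ω ∈ Bs then y n else x n with hZdef
      have hZmeas : Measurable Z := Measurable.ite hBsmeas measurable_const measurable_const
      have hZmemX : MemX P Z := by
        refine ⟨hZmeas, max |y n| |x n|, Filter.Eventually.of_forall fun ω => ?_⟩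
        rw [hZdef]
        by_cases h : ω ∈ Bs
        · simp [h, le_max_left]
        · simp [h, le_max_right]
      have hcomp : ∀ g : ℝ → ℝ,
          (fun ω => g (Z ω)) = fun ω => if ω ∈ Bs then g (y n) else g (x n) := by
        intro g
        funext ω
        rw [hZdef]
        by_cases h : ω ∈ Bs <;> simp [h]
      have hZL1 : MemL1 P I v Z := by
        refine ⟨hZmeas, Filter.Eventually.of_forall fun ω => ?_, ?_⟩
        · rw [hZdef]
          by_cases h : ω ∈ Bs
          · simp only [h, if_true]; exact hyI n
          · simp only [h, if_false]; exact hxI n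
        · rw [hcomp v]
          exact integrable_ite hBsmeas _ _
      have hcL1 : MemL1 P I v (fun _ => z) :=
        ⟨measurable_const, Filter.Eventually.of_forall fun _ => hzI, integrable_const _⟩
      -- the v-SD comparison
      have hvsd : vSD P I v Z (fun _ => z) := by
        intro u hu hRAu hint1 hint2
        have hInt : ∫ ω, u (Z ω) ∂P
            = (P Bs).toReal * u (y n) + (1 - (P Bs).toReal) * u (x n) := by
          rw [hcomp u]
          exact integral_ite hBsmeas _ _
        have hconst2 : ∫ ω, u ((fun _ => z) ω) ∂P = u z := by
          simp
        rw [hInt, hconst2, hPBs]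
        have hvzcomb : v z = (1 / (1 + δ)) * v (y n) + (1 - 1 / (1 + δ)) * v (x n) := by
          rw [hvz, hvy n]
          field_simp
          ring
        have hq1' : 1 / (1 + δ) < 1 := by
          rw [div_lt_one h1δ]
          linarith
        exact key_concave hIconn hv hu hRAu (hyI n) (hxI n)
          (lt_of_le_of_lt (hy0 n) hzmem.1)
          (lt_of_lt_of_le hzmem.2 (hx0 n))
          hqpos hq1' (lt_trans (hvyx n) (hvxgt n)) hvzcomb
      have hρZ : -z ≤ ρ Z := by
        have h3 := hcons Z (fun _ => z) hZmemX (memX_const z) hZL1 hcL1 hvsd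
        rw [hconstρ z] at h3
        exact h3
      -- compare tX + c with Z
      set c := x n - t * Bb with hcdef
      clear_value c
      have hptw : ∀ᵐ ω ∂P, t * X ω + c ≤ Z ω := by
        filter_upwards [hB1, hM1] with ω h1 h2
        rw [hZdef]
        by_cases h : ω ∈ Bs
        · simp only [h, if_true]
          have hωA : ω ∈ A := hBssub h
          rw [hAdef] at hωA
          simp only [Set.mem_setOf_eq] at hωA
          have hXω : X ω < -M + ε / 2 := by linarith only [hωA]
          rw [hcdef]
          have hstep := mul_le_mul_of_nonneg_left hXω.le htpos.le
          have hKexp : t * K = t * Bb + t * M - t * (ε / 2) := by rw [hKdef]; ring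
          linarith only [htK, hstep, hKexp]
        · simp only [h, if_false]
          rw [hcdef]
          have hstep := mul_le_mul_of_nonneg_left h1 htpos.le
          linarith only [hstep]
      have hle1 : ρ Z ≤ ρ (fun ω => t * X ω + c) :=
        hmono _ _ (memX_affine t c) hZmemX hptw
      have hcashT := hcash (fun ω => t * X ω) (memX_smul t) c
      have hρt : x n - t * Bb - z ≤ ρ (fun ω => t * X ω) := by
        rw [hcashT] at hle1
        rw [hcdef] at hle1
        linarith
      -- the quantitative estimate
      have hfrac : M - ε ≤ ρ (fun ω => t * X ω) / t := by
        rw [le_div_iff₀ htpos]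
        have hyz : y n < z := lt_of_le_of_lt (hy0 n) hzmem.1
        have hxz : z < x n := lt_of_lt_of_le hzmem.2 (hx0 n)
        have hγz : γ * (z - y n) ≤ x n - z := by linarith only [hcond1]
        have hmain : (M - ε) * t ≤ x n - t * Bb - z := by
          have hu1 : 0 < x n - z := by linarith
          have hu2 : 0 < z - y n := by linarith
          -- (K - ε/2) * (x n - y n) ≤ K * (x n - z)
          have hkey : (K - ε / 2) * (x n - y n) ≤ K * (x n - z) := by
            have hm1 := mul_le_mul_of_nonneg_left hγz (le_of_lt hε2)
            have hm2 : K * (z - y n) = ε / 2 * (γ * (z - y n)) := by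
              rw [← hKγ]; ring
            have hm3 : 0 ≤ ε / 2 * (z - y n) := mul_nonneg hε2.le hu2.le
            linarith only [hm1, hm2, hm3]
          -- t * (K - ε/2) ≤ x n - z
          have ht2 : t * (K - ε / 2) ≤ x n - z := by
            rw [htdef]
            rw [div_mul_eq_mul_div, div_le_iff₀ hK]
            linarith only [hkey]
          have hMε : M - ε = K - Bb - ε / 2 := by
            rw [hKdef]
            ring
          rw [hMε]
          linarith only [ht2]
        linarith only [hmain, hρt]
      -- transfer to a natural number
      refine ⟨max 1 ⌈t⌉₊, le_max_left _ _, ?_⟩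
      have hcast : t ≤ ((max 1 ⌈t⌉₊ : ℕ) : ℝ) := by
        have h1 : t ≤ (⌈t⌉₊ : ℝ) := Nat.le_ceil t
        have h2 : ((⌈t⌉₊ : ℕ) : ℝ) ≤ ((max 1 ⌈t⌉₊ : ℕ) : ℝ) :=
          Nat.cast_le.mpr (le_max_right _ _)
        linarith
      exact le_trans hfrac (hgm t _ htpos hcast)
  -- conclude
  rw [Metric.tendsto_atTop]
  intro ε hε
  obtain ⟨N0, hN0, hN0le⟩ := hlow (ε / 2) (half_pos hε)
  refine ⟨N0, fun n hn => ?_⟩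
  have h1 : 1 ≤ n := le_trans hN0 hn
  have hN0pos : (0:ℝ) < N0 := by exact_mod_cast Nat.lt_of_lt_of_le Nat.zero_lt_one hN0
  have hcastle : ((N0 : ℕ) : ℝ) ≤ ((n : ℕ) : ℝ) := Nat.cast_le.mpr hn
  have hlo : M - ε / 2 ≤ ρ (fun ω => (n : ℝ) * X ω) / n :=
    le_trans hN0le (hgm _ _ hN0pos hcastle)
  have hhi := hup n h1
  rw [Real.dist_eq, abs_lt]
  constructor <;> linarith

end Paper
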